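/- Let α, β be non-negative reals and let u₁, u₂, d, e, s, l be non-negative integers with u₁ + u₂ = e + s and 0 ≤ u₁, u₂, s ≤ e. With f as defined in the context, f([u₁, e,…,e, u₂]) ≥ min( f([s, e,…,e]), f([e,…,e, s]) ), where on the left the entry e is repeated l times and on the right it is repeated l+1 times. -/

import Mathlib

/-- The cut function `f(u) = ∑ᵢ min(uᵢ·α, (d − ∑_{j<i} uⱼ)·β)`. -/
def cutF (α β : ℝ) (d : ℕ) (u : List ℕ) : ℝ :=
  ∑ i ∈ Finset.range u.length,
    min ((u.getD i 0 : ℝ) * α) (((d : ℝ) - ((u.take i).sum : ℕ)) * β)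

lemma cutF_shape (α β : ℝ) (d a b e l : ℕ) :
    cutF α β d (a :: (List.replicate l e ++ [b])) =
      min ((a:ℝ)*α) ((d:ℝ)*β)
      + ∑ j ∈ Finset.range l, min ((e:ℝ)*α) (((d:ℝ) - ((a:ℝ) + j*e))*β)
      + min ((b:ℝ)*α) (((d:ℝ) - ((a:ℝ) + l*e))*β) := by
  unfold cutF
  rw [show (a :: (List.replicate l e ++ [b])).length = l+2 by simp]
  rw [Finset.sum_range_succ, Finset.sum_range_succ']
  have htake : ∀ j, j ≤ l → ((a :: (List.replicate l e ++ [b])).take (j+1)).sum = a + j * e := by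
    intro j hj
    rw [List.take_succ_cons, List.take_append_of_le_length (by simpa using hj), List.take_replicate]
    simp [Nat.min_eq_left hj, List.sum_replicate, mul_comm]
  have hmid : ∑ k ∈ Finset.range l,
      min (((a :: (List.replicate l e ++ [b])).getD (k+1) 0 : ℝ) * α)
        (((d:ℝ) - (((a :: (List.replicate l e ++ [b])).take (k+1)).sum : ℕ)) * β)
      = ∑ j ∈ Finset.range l, min ((e:ℝ)*α) (((d:ℝ) - ((a:ℝ) + j*e))*β) := by
    apply Finset.sum_congr rfl
    intro j hj
    rw [Finset.mem_range] at hj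
    rw [htake j hj.le]
    have : (a :: (List.replicate l e ++ [b])).getD (j+1) 0 = e := by
      simp [List.getD, List.getElem?_append_left, hj, List.getElem?_replicate]
    rw [this]
    push_cast
    ring_nf
  have hgetl : (a :: (List.replicate l e ++ [b])).getD (l+1) 0 = b := by
    simp [List.getD, List.getElem?_append_right, le_refl]
  have h0 : (((a :: (List.replicate l e ++ [b])).take 0).sum : ℕ) = 0 := rfl
  rw [hmid, hgetl, htake l le_rfl]
  simp only [h0, List.getD_cons_zero, Nat.cast_zero, sub_zero, Nat.cast_add, Nat.cast_mul]
  ring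

lemma min_combo {lam mu a₁ b₁ a₂ b₂ x y : ℝ} (hl : 0 ≤ lam) (hm : 0 ≤ mu)
    (hx : lam*a₁ + mu*a₂ = x) (hy : lam*b₁ + mu*b₂ = y) :
    lam * min a₁ b₁ + mu * min a₂ b₂ ≤ min x y := by
  subst hx hy
  apply le_min
  · exact add_le_add (mul_le_mul_of_nonneg_left (min_le_left _ _) hl)
      (mul_le_mul_of_nonneg_left (min_le_left _ _) hm)
  · exact add_le_add (mul_le_mul_of_nonneg_left (min_le_right _ _) hl)
      (mul_le_mul_of_nonneg_left (min_le_right _ _) hm)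

theorem stmt1 (α β : ℝ) (hα : 0 ≤ α) (hβ : 0 ≤ β)
    (u₁ u₂ d e s l : ℕ) (hsum : u₁ + u₂ = e + s)
    (hu₁ : u₁ ≤ e) (hu₂ : u₂ ≤ e) (hs : s ≤ e) :
    cutF α β d (u₁ :: (List.replicate l e ++ [u₂])) ≥
      min (cutF α β d (s :: List.replicate (l + 1) e))
          (cutF α β d (List.replicate (l + 1) e ++ [s])) := by
  have hrw1 : (s :: List.replicate (l + 1) e) = s :: (List.replicate l e ++ [e]) := by
    rw [List.replicate_succ']
  have hrw2 : (List.replicate (l + 1) e ++ [s]) = e :: (List.replicate l e ++ [s]) := by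
    rw [List.replicate_succ, List.cons_append]
  rw [hrw1, hrw2]
  by_cases hes : e = s
  · have h1 : u₁ = e := by omega
    have h2 : u₂ = e := by omega
    subst hes h1 h2
    simp
  have hse : (s:ℝ) < (e:ℝ) := by exact_mod_cast lt_of_le_of_ne hs (Ne.symm hes)
  have hsu : s ≤ u₁ := by omega
  set lam : ℝ := ((e:ℝ) - u₁)/((e:ℝ) - s) with hlamdef
  set mu : ℝ := ((u₁:ℝ) - s)/((e:ℝ) - s) with hmudef
  have hden : (0:ℝ) < (e:ℝ) - s := by linarith
  have hu₁R : (u₁:ℝ) ≤ e := by exact_mod_cast hu₁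
  have hsuR : (s:ℝ) ≤ u₁ := by exact_mod_cast hsu
  have hl : 0 ≤ lam := div_nonneg (by linarith) hden.le
  have hm : 0 ≤ mu := div_nonneg (by linarith) hden.le
  have h1 : lam + mu = 1 := by
    rw [hlamdef, hmudef, ← add_div, div_eq_one_iff_eq hden.ne']
    ring
  have h2 : lam * s + mu * e = u₁ := by
    rw [hlamdef, hmudef]
    field_simp
    ring
  have hsumR : (u₁:ℝ) + u₂ = (e:ℝ) + s := by exact_mod_cast hsum
  have h3 : lam * e + mu * s = u₂ := by
    rw [hlamdef, hmudef]
    field_simp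
    linear_combination ((s:ℝ) - e) * hsumR
  rw [cutF_shape, cutF_shape, cutF_shape]
  set F1 := min ((s:ℝ)*α) ((d:ℝ)*β)
      + ∑ j ∈ Finset.range l, min ((e:ℝ)*α) (((d:ℝ) - ((s:ℝ) + j*e))*β)
      + min ((e:ℝ)*α) (((d:ℝ) - ((s:ℝ) + l*e))*β) with hF1
  set F2 := min ((e:ℝ)*α) ((d:ℝ)*β)
      + ∑ j ∈ Finset.range l, min ((e:ℝ)*α) (((d:ℝ) - ((e:ℝ) + j*e))*β)
      + min ((s:ℝ)*α) (((d:ℝ) - ((e:ℝ) + l*e))*β) with hF2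
  have step1 : min F1 F2 ≤ lam * F1 + mu * F2 := by
    have a1 := mul_le_mul_of_nonneg_left (min_le_left F1 F2) hl
    have a2 := mul_le_mul_of_nonneg_left (min_le_right F1 F2) hm
    calc min F1 F2 = lam * min F1 F2 + mu * min F1 F2 := by rw [← add_mul, h1, one_mul]
      _ ≤ lam * F1 + mu * F2 := add_le_add a1 a2
  have hhead : lam * min ((s:ℝ)*α) ((d:ℝ)*β) + mu * min ((e:ℝ)*α) ((d:ℝ)*β)
      ≤ min ((u₁:ℝ)*α) ((d:ℝ)*β) := by
    apply min_combo hl hm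
    · linear_combination α * h2
    · linear_combination (d:ℝ) * β * h1
  have hmidsum : lam * (∑ j ∈ Finset.range l, min ((e:ℝ)*α) (((d:ℝ) - ((s:ℝ) + j*e))*β))
      + mu * (∑ j ∈ Finset.range l, min ((e:ℝ)*α) (((d:ℝ) - ((e:ℝ) + j*e))*β))
      ≤ ∑ j ∈ Finset.range l, min ((e:ℝ)*α) (((d:ℝ) - ((u₁:ℝ) + j*e))*β) := by
    rw [Finset.mul_sum, Finset.mul_sum, ← Finset.sum_add_distrib]
    apply Finset.sum_le_sum
    intro j _
    apply min_combo hl hm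
    · linear_combination (e:ℝ) * α * h1
    · linear_combination ((d:ℝ) - (j:ℝ)*(e:ℝ)) * β * h1 - β * h2
  have htail : lam * min ((e:ℝ)*α) (((d:ℝ) - ((s:ℝ) + l*e))*β)
      + mu * min ((s:ℝ)*α) (((d:ℝ) - ((e:ℝ) + l*e))*β)
      ≤ min ((u₂:ℝ)*α) (((d:ℝ) - ((u₁:ℝ) + l*e))*β) := by
    apply min_combo hl hm
    · linear_combination α * h3
    · linear_combination ((d:ℝ) - (l:ℝ)*(e:ℝ)) * β * h1 - β * h2
  have step2 : lam * F1 + mu * F2 ≤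
      min ((u₁:ℝ)*α) ((d:ℝ)*β)
      + ∑ j ∈ Finset.range l, min ((e:ℝ)*α) (((d:ℝ) - ((u₁:ℝ) + j*e))*β)
      + min ((u₂:ℝ)*α) (((d:ℝ) - ((u₁:ℝ) + l*e))*β) := by
    rw [hF1, hF2]
    calc lam * (_ + _ + _) + mu * (_ + _ + _)
        = (lam * min ((s:ℝ)*α) ((d:ℝ)*β) + mu * min ((e:ℝ)*α) ((d:ℝ)*β))
          + (lam * (∑ j ∈ Finset.range l, min ((e:ℝ)*α) (((d:ℝ) - ((s:ℝ) + j*e))*β))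
            + mu * (∑ j ∈ Finset.range l, min ((e:ℝ)*α) (((d:ℝ) - ((e:ℝ) + j*e))*β)))
          + (lam * min ((e:ℝ)*α) (((d:ℝ) - ((s:ℝ) + l*e))*β)
            + mu * min ((s:ℝ)*α) (((d:ℝ) - ((e:ℝ) + l*e))*β)) := by ring
      _ ≤ _ := add_le_add (add_le_add hhead hmidsum) htail
  exact le_trans step1 step2
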